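/- If a > b > 0 are real numbers and z ∈ ℂ with |z| < b, then Re(z²/(a(a−z))) − |z|²/(a(a−|z|)) ≥ Re(z²/(b(b−z))) − |z|²/(b(b−|z|)), with strict inequality when |z| < b < a and z is not a nonnegative real. -/

import Mathlib

set_option maxHeartbeats 2000000 in
/-- If a > b > 0 and |z| < b, then
Re(z²/(a(a−z))) − |z|²/(a(a−|z|)) ≥ Re(z²/(b(b−z))) − |z|²/(b(b−|z|)), with strict
inequality when z is not a nonnegative real. -/
theorem monotone_difference (a b : ℝ) (hab : b < a) (hb : 0 < b) (z : ℂ)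
    (hz : ‖z‖ < b) :
    ((z ^ 2 / ((b : ℂ) * ((b : ℂ) - z))).re - (‖z‖) ^ 2 / (b * (b - ‖z‖))
      ≤ (z ^ 2 / ((a : ℂ) * ((a : ℂ) - z))).re - (‖z‖) ^ 2 / (a * (a - ‖z‖)))
    ∧ (¬ (z.im = 0 ∧ 0 ≤ z.re) →
      (z ^ 2 / ((b : ℂ) * ((b : ℂ) - z))).re - (‖z‖) ^ 2 / (b * (b - ‖z‖))
      < (z ^ 2 / ((a : ℂ) * ((a : ℂ) - z))).re - (‖z‖) ^ 2 / (a * (a - ‖z‖))) := by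
  set x := z.re with hxdef
  set y := z.im with hydef
  set r := ‖z‖ with hrdef
  have hr0 : 0 ≤ r := norm_nonneg z
  have hrb : r < b := hz
  have hra : r < a := lt_trans hrb hab
  have ha : 0 < a := lt_trans hb hab
  have hr2 : x ^ 2 + y ^ 2 = r ^ 2 := by
    rw [hrdef, Complex.sq_norm, Complex.normSq_apply]; ring
  have hxr : x ≤ r := Complex.re_le_norm z
  have hxr' : -r ≤ x := neg_le_of_abs_le (Complex.abs_re_le_norm z)
  have hxb : x < b := lt_of_le_of_lt hxr hrb
  have hxa : x < a := lt_trans hxb hab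
  have hDa : 0 < a ^ 2 - 2 * a * x + r ^ 2 := by
    nlinarith [sq_nonneg y, mul_pos (sub_pos.2 hxa) (sub_pos.2 hxa)]
  have hDb : 0 < b ^ 2 - 2 * b * x + r ^ 2 := by
    nlinarith [sq_nonneg y, mul_pos (sub_pos.2 hxb) (sub_pos.2 hxb)]
  have hEa : 0 < a - r := sub_pos.2 hra
  have hEb : 0 < b - r := sub_pos.2 hrb
  -- the real part formula
  have hform : ∀ t : ℝ, r < t →
      (z ^ 2 / ((t : ℂ) * ((t : ℂ) - z))).re
        = ((2 * x ^ 2 - r ^ 2) * t - r ^ 2 * x) / (t * (t ^ 2 - 2 * t * x + r ^ 2)) := by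
    intro t ht
    have ht0 : 0 < t := lt_of_le_of_lt hr0 ht
    have hxt : x < t := lt_of_le_of_lt hxr ht
    have hDt : 0 < t ^ 2 - 2 * t * x + r ^ 2 := by
      nlinarith [sq_nonneg y, mul_pos (sub_pos.2 hxt) (sub_pos.2 hxt)]
    rw [← hr2] at hDt ⊢
    have hden : t * (t ^ 2 - 2 * t * x + (x ^ 2 + y ^ 2)) ≠ 0 := ne_of_gt (mul_pos ht0 hDt)
    have hden2 : -(x * t ^ 2 * 2) + x ^ 2 * t + y ^ 2 * t + t ^ 3 ≠ 0 := by
      intro h; apply hden; linear_combination h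
    have hW : ((t : ℂ) * ((t : ℂ) - z)) ≠ 0 := by
      apply mul_ne_zero
      · exact_mod_cast ht0.ne'
      · intro h
        have hzt : z = (t : ℂ) := by
          have := sub_eq_zero.mp h
          linear_combination -this
        have : r = t := by rw [hrdef, hzt, Complex.norm_real, Real.norm_eq_abs, abs_of_pos ht0]
        linarith
    have hdenC : ((t * (t ^ 2 - 2 * t * x + (x ^ 2 + y ^ 2)) : ℝ) : ℂ) ≠ 0 := by
      exact_mod_cast hden
    have hid : z ^ 2 * (((t * (t ^ 2 - 2 * t * x + (x ^ 2 + y ^ 2)) : ℝ)) : ℂ)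
        = (((((2 * x ^ 2 - (x ^ 2 + y ^ 2)) * t - (x ^ 2 + y ^ 2) * x : ℝ)) : ℂ)
            + (((y * (2 * t * x - (x ^ 2 + y ^ 2)) : ℝ)) : ℂ) * Complex.I)
          * ((t : ℂ) * ((t : ℂ) - z)) := by
      apply Complex.ext
      · simp only [Complex.add_re, Complex.add_im, Complex.mul_re, Complex.mul_im,
          Complex.sub_re, Complex.sub_im, Complex.ofReal_re, Complex.ofReal_im,
          Complex.I_re, Complex.I_im, pow_two, ← hxdef, ← hydef]
        ring
      · simp only [Complex.add_re, Complex.add_im, Complex.mul_re, Complex.mul_im,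
          Complex.sub_re, Complex.sub_im, Complex.ofReal_re, Complex.ofReal_im,
          Complex.I_re, Complex.I_im, pow_two, ← hxdef, ← hydef]
        ring
    have h3 : z ^ 2 / ((t : ℂ) * ((t : ℂ) - z))
        = (((((2 * x ^ 2 - (x ^ 2 + y ^ 2)) * t - (x ^ 2 + y ^ 2) * x : ℝ)) : ℂ)
            + (((y * (2 * t * x - (x ^ 2 + y ^ 2)) : ℝ)) : ℂ) * Complex.I)
          / (((t * (t ^ 2 - 2 * t * x + (x ^ 2 + y ^ 2)) : ℝ)) : ℂ) := by
      rw [div_eq_div_iff hW hdenC]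
      linear_combination hid
    rw [h3, Complex.div_ofReal_re]
    simp only [Complex.add_re, Complex.mul_re, Complex.I_re, Complex.I_im, Complex.ofReal_re,
      Complex.ofReal_im, mul_zero, mul_one, zero_mul, sub_zero, zero_sub, add_zero, neg_zero]
  -- abbreviations for the certificate
  have hFid : 2 * r * ((r - x) * (2*a*b*r*((a+b)*(a*b+r^2) - 2*a*b*(r+x))
        + (a-r)*(b-r)*(a*b*(a*b+r^2) - (a^2-2*a*x+r^2)*(b^2-2*b*x+r^2))))
      = (r - x) * ((r + x) * (2*a*b*r*(b*(a-r)^2 + a*(b-r)^2)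
            + (a-r)*(b-r)*(a*b*(a*b+r^2) - ((a-r)*(b-r))^2))
          + (r - x) * ((a+r)*(b+r)*r^2*(a^2+a*b+b^2-r^2))
          + 8*a*b*r*((a-r)*(b-r))*(r-x)*(r+x)) := by ring
  have hF0 : 0 ≤ 2*a*b*r*(b*(a-r)^2 + a*(b-r)^2)
      + (a-r)*(b-r)*(a*b*(a*b+r^2) - ((a-r)*(b-r))^2) := by
    have h1 : (a-r)*(b-r) ≤ a*b := by nlinarith
    have h2 : ((a-r)*(b-r))^2 ≤ (a*b)^2 :=
      pow_le_pow_left₀ (le_of_lt (mul_pos hEa hEb)) h1 2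
    have h3 : 0 ≤ 2*a*b*r*(b*(a-r)^2 + a*(b-r)^2) := by positivity
    nlinarith [mul_pos hEa hEb, mul_pos ha hb, sq_nonneg r,
      mul_nonneg (mul_nonneg (le_of_lt (mul_pos hEa hEb)) (le_of_lt (mul_pos ha hb))) (sq_nonneg r)]
  have hF2 : 0 ≤ (a+r)*(b+r)*r^2*(a^2+a*b+b^2-r^2) := by
    have h4 : 0 < a^2 + a*b + b^2 - r^2 := by nlinarith
    positivity
  have hD : 0 < a*b*(a-r)*(b-r)*(a^2-2*a*x+r^2)*(b^2-2*b*x+r^2) := by positivity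
  have key : ((2 * x ^ 2 - r ^ 2) * a - r ^ 2 * x) / (a * (a ^ 2 - 2 * a * x + r ^ 2))
        - r ^ 2 / (a * (a - r))
        - (((2 * x ^ 2 - r ^ 2) * b - r ^ 2 * x) / (b * (b ^ 2 - 2 * b * x + r ^ 2))
          - r ^ 2 / (b * (b - r)))
      = ((a - b) * ((r - x) * (2*a*b*r*((a+b)*(a*b+r^2) - 2*a*b*(r+x))
          + (a-r)*(b-r)*(a*b*(a*b+r^2) - (a^2-2*a*x+r^2)*(b^2-2*b*x+r^2)))))
        / (a*b*(a-r)*(b-r)*(a^2-2*a*x+r^2)*(b^2-2*b*x+r^2)) := by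
    have n1 : a * (a ^ 2 - 2 * a * x + r ^ 2) ≠ 0 := mul_ne_zero ha.ne' hDa.ne'
    have n2 : a * (a - r) ≠ 0 := mul_ne_zero ha.ne' hEa.ne'
    have n3 : b * (b ^ 2 - 2 * b * x + r ^ 2) ≠ 0 := mul_ne_zero hb.ne' hDb.ne'
    have n4 : b * (b - r) ≠ 0 := mul_ne_zero hb.ne' hEb.ne'
    rw [div_sub_div _ _ n1 n2, div_sub_div _ _ n3 n4,
      div_sub_div _ _ (mul_ne_zero n1 n2) (mul_ne_zero n3 n4),
      div_eq_div_iff (mul_ne_zero (mul_ne_zero n1 n2) (mul_ne_zero n3 n4)) hD.ne']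
    ring
  constructor
  · rw [hform b hrb, hform a hra, ← sub_nonneg, key]
    apply div_nonneg _ (le_of_lt hD)
    apply mul_nonneg (sub_nonneg.2 (le_of_lt hab))
    rcases lt_or_eq_of_le hr0 with hr | hr
    · nlinarith [hFid, hF0, hF2, mul_nonneg (mul_nonneg (le_of_lt ha) (le_of_lt hb))
        (mul_nonneg (mul_nonneg (mul_nonneg (le_of_lt hr) (le_of_lt (mul_pos hEa hEb)))
          (sub_nonneg.2 hxr)) (by linarith : (0:ℝ) ≤ r + x)),
        mul_nonneg (sub_nonneg.2 hxr) (by linarith : (0:ℝ) ≤ r + x),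
        mul_nonneg (mul_nonneg (sub_nonneg.2 hxr) (by linarith : (0:ℝ) ≤ r + x)) hF0,
        mul_nonneg (mul_nonneg (sub_nonneg.2 hxr) (sub_nonneg.2 hxr)) hF2]
    · have hx0 : x = 0 := le_antisymm (hr ▸ hxr) (by linarith [hxr'])
      rw [← hr, hx0]
      simp
  · intro hstrict
    have hxltr : x < r := by
      rcases lt_or_ge x r with h | h
      · exact h
      · exfalso
        have hy0 : y = 0 := by nlinarith [sq_nonneg y]
        exact hstrict ⟨hy0, le_trans hr0 h⟩
    have hrpos : 0 < r := by linarith [hxr']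
    rw [hform b hrb, hform a hra, ← sub_pos, key]
    apply div_pos _ hD
    apply mul_pos (sub_pos.2 hab)
    have h4 : 0 < a^2 + a*b + b^2 - r^2 := by nlinarith
    have hF2' : 0 < (a+r)*(b+r)*r^2*(a^2+a*b+b^2-r^2) := by positivity
    nlinarith [hFid, hF0, mul_pos (mul_pos (sub_pos.2 hxltr) (sub_pos.2 hxltr)) hF2',
      mul_nonneg (mul_nonneg (sub_nonneg.2 (le_of_lt hxltr)) (by linarith : (0:ℝ) ≤ r + x)) hF0,
      mul_nonneg (mul_nonneg (mul_nonneg (mul_nonneg (by positivity : (0:ℝ) ≤ 8*a*b*r)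
        (le_of_lt (mul_pos hEa hEb))) (sub_nonneg.2 (le_of_lt hxltr)))
        (sub_nonneg.2 (le_of_lt hxltr))) (by linarith : (0:ℝ) ≤ r + x)]
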